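/- Let A be a complete, cocomplete category with stable monomorphisms and split epimorphisms. Then Monad(A) has (strong epi, mono)-factorizations of morphisms: every monad morphism f : S → T factors as f = m ∘ e where e is a monad morphism with split epic components and m is a monad morphism with monic components; moreover m is a monomorphism and e a strong epimorphism in Monad(A). -/

import Mathlib

open CategoryTheory CategoryTheory.Limits

universe v u

/-- A cocomplete category has *stable monomorphisms* if coproducts of parallel
collections of monomorphisms are monic, and colimits of chains of monomorphisms
consist of monics, with the map induced by any cocone of monics being monic. -/
structure StableMonos (A : Type u) [Category.{v} A] [HasColimits A] : Prop where
  /-- coproducts of parallel collections of monomorphisms are monic -/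
  sigma_map_mono : ∀ {ι : Type v} {X Y : ι → A} (f : ∀ i, X i ⟶ Y i),
    (∀ i, Mono (f i)) → Mono (Limits.Sigma.map f)
  /-- the binary instance of the previous condition -/
  coprod_map_mono : ∀ {X X' Y Y' : A} (f : X ⟶ Y) (g : X' ⟶ Y'),
    Mono f → Mono g → Mono (Limits.coprod.map f g)
  /-- colimits of chains of monomorphisms consist of monics -/
  chain_colimit_mono : ∀ {J : Type v} [LinearOrder J] (D : J ⥤ A),
    (∀ (i j : J) (h : i ⟶ j), Mono (D.map h)) → ∀ j : J, Mono (Limits.colimit.ι D j)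
  /-- the map induced by a cocone of monics on the colimit of a chain of monics is monic -/
  chain_desc_mono : ∀ {J : Type v} [LinearOrder J] (D : J ⥤ A)
    (_ : ∀ (i j : J) (h : i ⟶ j), Mono (D.map h))
    (c : Limits.Cocone D), (∀ j : J, Mono (c.ι.app j)) → Mono (Limits.colimit.desc D c)

set_option linter.unusedSectionVars false

set_option maxHeartbeats 1000000

namespace Stmt8Aux

variable {A : Type u} [Category.{v} A] [HasLimits A] [HasColimits A]

/-- cancellation along a split epi -/
theorem splitEpi_cancel {X Y Z : A} {g : X ⟶ Y} (sp : SplitEpi g) {a b : Y ⟶ Z}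
    (h : g ≫ a = g ≫ b) : a = b := by
  have h2 : sp.section_ ≫ g ≫ a = sp.section_ ≫ g ≫ b := by rw [h]
  simpa [← Category.assoc, sp.id] using h2

section PullbackMonad

variable {M₁ M₂ : Monad A} (n : M₁ ⟶ M₂)

/-- the pullback of a monad morphism along itself, at the level of functors -/
noncomputable def Pfun : A ⥤ A := pullback n.toNatTrans n.toNatTrans

/-- first projection of the kernel pair -/
noncomputable def pr₁ : Pfun n ⟶ M₁.toFunctor := pullback.fst _ _

/-- second projection of the kernel pair -/
noncomputable def pr₂ : Pfun n ⟶ M₁.toFunctor := pullback.snd _ _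

theorem pr_cond : pr₁ n ≫ n.toNatTrans = pr₂ n ≫ n.toNatTrans := pullback.condition

theorem pr_cond_app (X : A) :
    (pr₁ n).app X ≫ n.app X = (pr₂ n).app X ≫ n.app X := by
  simpa using NatTrans.congr_app (pr_cond n) X

/-- the pullback is a pointwise pullback -/
noncomputable def pbPt (X : A) :=
  isLimitOfHasPullbackOfPreservesLimit ((evaluation A A).obj X)
    n.toNatTrans n.toNatTrans

theorem pb_jointly_mono {X : A} {W : A} {a b : W ⟶ (Pfun n).obj X}
    (h₁ : a ≫ (pr₁ n).app X = b ≫ (pr₁ n).app X)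
    (h₂ : a ≫ (pr₂ n).app X = b ≫ (pr₂ n).app X) : a = b :=
  PullbackCone.IsLimit.hom_ext (pbPt n X) h₁ h₂

theorem pb_lift {X : A} {W : A} (a b : W ⟶ M₁.obj X) (w : a ≫ n.app X = b ≫ n.app X) :
    ∃ t : W ⟶ (Pfun n).obj X, t ≫ (pr₁ n).app X = a ∧ t ≫ (pr₂ n).app X = b :=
  ⟨PullbackCone.IsLimit.lift (pbPt n X) a b w,
    PullbackCone.IsLimit.lift_fst (pbPt n X) a b w,
    PullbackCone.IsLimit.lift_snd (pbPt n X) a b w⟩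

/-- the unit of the pullback monad -/
noncomputable def Pη : 𝟭 A ⟶ Pfun n :=
  pullback.lift M₁.η M₁.η rfl

theorem Pη_fst (X : A) : (Pη n).app X ≫ (pr₁ n).app X = M₁.η.app X := by
  have h : Pη n ≫ pr₁ n = M₁.η := pullback.lift_fst _ _ _
  simpa using NatTrans.congr_app h X

theorem Pη_snd (X : A) : (Pη n).app X ≫ (pr₂ n).app X = M₁.η.app X := by
  have h : Pη n ≫ pr₂ n = M₁.η := pullback.lift_snd _ _ _
  simpa using NatTrans.congr_app h X

/-- the candidate first leg of the multiplication -/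
noncomputable def Pg1 : Pfun n ⋙ Pfun n ⟶ M₁.toFunctor :=
  Functor.whiskerLeft (Pfun n) (pr₁ n) ≫ Functor.whiskerRight (pr₁ n) M₁.toFunctor ≫ M₁.μ

/-- the candidate second leg of the multiplication -/
noncomputable def Pg2 : Pfun n ⋙ Pfun n ⟶ M₁.toFunctor :=
  Functor.whiskerLeft (Pfun n) (pr₂ n) ≫ Functor.whiskerRight (pr₂ n) M₁.toFunctor ≫ M₁.μ

theorem hcomp_mu (pr : Pfun n ⟶ M₁.toFunctor) (X : A) :
    pr.app ((Pfun n).obj X) ≫ M₁.map (pr.app X) ≫ M₁.μ.app X ≫ n.app X =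
      (pr.app ((Pfun n).obj X) ≫ n.app ((Pfun n).obj X)) ≫
        M₂.map (pr.app X ≫ n.app X) ≫ M₂.μ.app X := by
  rw [n.app_μ X]
  simp only [Category.assoc]
  rw [← Functor.map_comp_assoc, n.toNatTrans.naturality_assoc]

theorem Pg_cond : Pg1 n ≫ n.toNatTrans = Pg2 n ≫ n.toNatTrans := by
  ext X
  have h1 := hcomp_mu n (pr₁ n) X
  have h2 := hcomp_mu n (pr₂ n) X
  simp only [NatTrans.comp_app, Pg1, Pg2, Functor.whiskerLeft_app, Functor.whiskerRight_app, Category.assoc]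
  rw [h1, h2, pr_cond_app n X, pr_cond_app n ((Pfun n).obj X)]

/-- the multiplication of the pullback monad -/
noncomputable def Pμ : Pfun n ⋙ Pfun n ⟶ Pfun n :=
  pullback.lift (Pg1 n) (Pg2 n) (Pg_cond n)

theorem Pμ_fst (X : A) :
    (Pμ n).app X ≫ (pr₁ n).app X =
      (pr₁ n).app ((Pfun n).obj X) ≫ M₁.map ((pr₁ n).app X) ≫ M₁.μ.app X := by
  have h : Pμ n ≫ pr₁ n = Pg1 n := pullback.lift_fst _ _ _
  have h2 := NatTrans.congr_app h X
  simp only [NatTrans.comp_app] at h2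
  rw [h2]
  simp [Pg1]

theorem Pμ_snd (X : A) :
    (Pμ n).app X ≫ (pr₂ n).app X =
      (pr₂ n).app ((Pfun n).obj X) ≫ M₁.map ((pr₂ n).app X) ≫ M₁.μ.app X := by
  have h : Pμ n ≫ pr₂ n = Pg2 n := pullback.lift_snd _ _ _
  have h2 := NatTrans.congr_app h X
  simp only [NatTrans.comp_app] at h2
  rw [h2]
  simp [Pg2]

theorem Pμ_assoc_pr (pr : Pfun n ⟶ M₁.toFunctor)
    (hμ : ∀ X, (Pμ n).app X ≫ pr.app X =
      pr.app ((Pfun n).obj X) ≫ M₁.map (pr.app X) ≫ M₁.μ.app X) (X : A) :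
    ((Pfun n).map ((Pμ n).app X) ≫ (Pμ n).app X) ≫ pr.app X =
      ((Pμ n).app ((Pfun n).obj X) ≫ (Pμ n).app X) ≫ pr.app X := by
  have natμ := M₁.μ.naturality_assoc (pr.app X) (M₁.μ.app X)
  simp only [Functor.comp_map] at natμ
  simp only [Category.assoc]
  rw [hμ X]
  rw [pr.naturality_assoc ((Pμ n).app X)]
  rw [← Functor.map_comp_assoc M₁.toFunctor ((Pμ n).app X) (pr.app X)]
  rw [hμ X]
  simp only [Functor.map_comp, Category.assoc]
  rw [M₁.assoc X]
  rw [natμ]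
  rw [reassoc_of% hμ ((Pfun n).obj X)]
  rfl

theorem Pμ_left_unit_pr (pr : Pfun n ⟶ M₁.toFunctor)
    (hμ : ∀ X, (Pμ n).app X ≫ pr.app X =
      pr.app ((Pfun n).obj X) ≫ M₁.map (pr.app X) ≫ M₁.μ.app X)
    (hη : ∀ X, (Pη n).app X ≫ pr.app X = M₁.η.app X) (X : A) :
    (Pη n).app ((Pfun n).obj X) ≫ (Pμ n).app X ≫ pr.app X = pr.app X := by
  have natη := M₁.η.naturality (pr.app X)
  simp only [Functor.id_map] at natη
  rw [hμ X]
  rw [reassoc_of% hη ((Pfun n).obj X)]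
  rw [← reassoc_of% natη]
  rw [M₁.left_unit X]
  simp

theorem Pμ_right_unit_pr (pr : Pfun n ⟶ M₁.toFunctor)
    (hμ : ∀ X, (Pμ n).app X ≫ pr.app X =
      pr.app ((Pfun n).obj X) ≫ M₁.map (pr.app X) ≫ M₁.μ.app X)
    (hη : ∀ X, (Pη n).app X ≫ pr.app X = M₁.η.app X) (X : A) :
    (Pfun n).map ((Pη n).app X) ≫ (Pμ n).app X ≫ pr.app X = pr.app X := by
  rw [hμ X]
  rw [pr.naturality_assoc ((Pη n).app X)]
  rw [← Functor.map_comp_assoc M₁.toFunctor ((Pη n).app X) (pr.app X)]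
  rw [hη X, M₁.right_unit X]
  simp

/-- the pullback monad -/
noncomputable def Pmonad : Monad A where
  toFunctor := Pfun n
  η := Pη n
  μ := Pμ n
  assoc X := pb_jointly_mono n
    (by simpa only [Category.assoc] using Pμ_assoc_pr n (pr₁ n) (Pμ_fst n) X)
    (by simpa only [Category.assoc] using Pμ_assoc_pr n (pr₂ n) (Pμ_snd n) X)
  left_unit X := pb_jointly_mono n
    (by simpa only [Category.assoc, Category.id_comp] using
      Pμ_left_unit_pr n (pr₁ n) (Pμ_fst n) (Pη_fst n) X)
    (by simpa only [Category.assoc, Category.id_comp] using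
      Pμ_left_unit_pr n (pr₂ n) (Pμ_snd n) (Pη_snd n) X)
  right_unit X := pb_jointly_mono n
    (by simpa only [Category.assoc, Category.id_comp] using
      Pμ_right_unit_pr n (pr₁ n) (Pμ_fst n) (Pη_fst n) X)
    (by simpa only [Category.assoc, Category.id_comp] using
      Pμ_right_unit_pr n (pr₂ n) (Pμ_snd n) (Pη_snd n) X)

/-- the first projection as a monad morphism -/
noncomputable def PprM1 : Pmonad n ⟶ M₁ where
  toNatTrans := pr₁ n
  app_η X := Pη_fst n X
  app_μ X := by
    show (Pμ n).app X ≫ (pr₁ n).app X =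
      ((Pfun n).map ((pr₁ n).app X) ≫ (pr₁ n).app (M₁.obj X)) ≫ M₁.μ.app X
    rw [Pμ_fst n X, (pr₁ n).naturality ((pr₁ n).app X)]
    simp only [Category.assoc]

/-- the second projection as a monad morphism -/
noncomputable def PprM2' : Pmonad n ⟶ M₁ where
  toNatTrans := pr₂ n
  app_η X := Pη_snd n X
  app_μ X := by
    show (Pμ n).app X ≫ (pr₂ n).app X =
      ((Pfun n).map ((pr₂ n).app X) ≫ (pr₂ n).app (M₁.obj X)) ≫ M₁.μ.app X
    rw [Pμ_snd n X, (pr₂ n).naturality ((pr₂ n).app X)]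
    simp only [Category.assoc]

theorem mono_app_of_mono (h : Mono n) (X : A) : Mono (n.app X) := by
  constructor
  intro W a b hab
  obtain ⟨t, ht1, ht2⟩ := pb_lift n a b hab
  have hpr : PprM1 n ≫ n = PprM2' n ≫ n := by
    apply MonadHom.ext'
    funext Y
    exact pr_cond_app n Y
  have : PprM1 n = PprM2' n := (cancel_mono n).mp hpr
  have happ : (pr₁ n).app X = (pr₂ n).app X := by
    have := congrArg MonadHom.toNatTrans this
    exact NatTrans.congr_app this X
  rw [← ht1, ← ht2, happ]

end PullbackMonad

section Factorization

variable {S T : Monad A} (f : S ⟶ T)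

/-- the kernel pair object of `f` in the functor category -/
noncomputable def Kf : A ⥤ A := pullback f.toNatTrans f.toNatTrans

/-- first projection of the kernel pair of `f` -/
noncomputable def kp₁ : Kf f ⟶ S.toFunctor := pullback.fst _ _

/-- second projection of the kernel pair of `f` -/
noncomputable def kp₂ : Kf f ⟶ S.toFunctor := pullback.snd _ _

/-- the coequalizer of the kernel pair, i.e. the underlying functor of the image monad -/
noncomputable def Qf : A ⥤ A := coequalizer (kp₁ f) (kp₂ f)

/-- the projection onto the image -/
noncomputable def e₀ : S.toFunctor ⟶ Qf f := coequalizer.π (kp₁ f) (kp₂ f)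

/-- the inclusion of the image -/
noncomputable def m₀ : Qf f ⟶ T.toFunctor :=
  coequalizer.desc f.toNatTrans pullback.condition

theorem em : e₀ f ≫ m₀ f = f.toNatTrans := coequalizer.π_desc _ _

theorem em_app (X : A) : (e₀ f).app X ≫ (m₀ f).app X = f.app X := by
  simpa using NatTrans.congr_app (em f) X

theorem kp_e_app (X : A) :
    (kp₁ f).app X ≫ (e₀ f).app X = (kp₂ f).app X ≫ (e₀ f).app X := by
  have h := NatTrans.congr_app (coequalizer.condition (kp₁ f) (kp₂ f)) X
  simp at h
  exact h

/-- the coequalizer is a pointwise coequalizer -/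
noncomputable def coeqPt (X : A) :=
  isColimitOfHasCoequalizerOfPreservesColimit ((evaluation A A).obj X)
    (kp₁ f) (kp₂ f)

/-- each component of `e₀` is a regular epi -/
noncomputable def regE (X : A) : RegularEpi ((e₀ f).app X) where
  W := (Kf f).obj X
  left := (kp₁ f).app X
  right := (kp₂ f).app X
  w := kp_e_app f X
  isColimit := coeqPt f X

/-- the pullback is a pointwise pullback -/
noncomputable def kpPt (X : A) :=
  isLimitOfHasPullbackOfPreservesLimit ((evaluation A A).obj X)
    f.toNatTrans f.toNatTrans

/-- `e₀.app X` kills whatever `f.app X` kills -/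
theorem cancel_e {X : A} {W : A} {a b : W ⟶ S.obj X}
    (h : a ≫ f.app X = b ≫ f.app X) : a ≫ (e₀ f).app X = b ≫ (e₀ f).app X := by
  obtain ⟨t, h1, h2⟩ : ∃ t : W ⟶ (Kf f).obj X,
      t ≫ (kp₁ f).app X = a ∧ t ≫ (kp₂ f).app X = b :=
    ⟨PullbackCone.IsLimit.lift (kpPt f X) a b h,
      PullbackCone.IsLimit.lift_fst (kpPt f X) a b h,
      PullbackCone.IsLimit.lift_snd (kpPt f X) a b h⟩
  calc a ≫ (e₀ f).app X = t ≫ (kp₁ f).app X ≫ (e₀ f).app X := by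
        rw [← Category.assoc, h1]
    _ = t ≫ (kp₂ f).app X ≫ (e₀ f).app X := by rw [kp_e_app f X]
    _ = b ≫ (e₀ f).app X := by rw [← Category.assoc, h2]

theorem cancel_e' {X : A} {W : A} {a b : W ⟶ S.obj X}
    (h : a ≫ (e₀ f).app X = b ≫ (e₀ f).app X) : a ≫ f.app X = b ≫ f.app X := by
  rw [← em_app f X, ← Category.assoc, ← Category.assoc, h]

variable (hsplit : ∀ ⦃X Y : A⦄ (g : X ⟶ Y), StrongEpi g → IsSplitEpi g)

include hsplit

/-- a chosen splitting of each component of `e₀` -/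
noncomputable def sec (X : A) : SplitEpi ((e₀ f).app X) := by
  have hreg := regE f X
  have hstrong : StrongEpi ((e₀ f).app X) := by
    haveI : IsRegularEpi ((e₀ f).app X) := ⟨⟨hreg⟩⟩
    infer_instance
  exact (hsplit _ hstrong).exists_splitEpi.some

theorem mono_m₀ (X : A) : Mono ((m₀ f).app X) := by
  constructor
  intro W u v huv
  have h : (u ≫ (sec f hsplit X).section_) ≫ f.app X =
      (v ≫ (sec f hsplit X).section_) ≫ f.app X := by
    rw [← em_app f X]
    simp only [← Category.assoc]
    rw [Category.assoc u, Category.assoc v, (sec f hsplit X).id]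
    simpa using huv
  have h2 := cancel_e f h
  rw [Category.assoc, Category.assoc, (sec f hsplit X).id, Category.comp_id,
    Category.comp_id] at h2
  exact h2

/-- the horizontal composite `e₀ ◫ e₀` pointwise -/
noncomputable def E2 (_hsplit : ∀ ⦃X Y : A⦄ (g : X ⟶ Y), StrongEpi g → IsSplitEpi g)
    (X : A) : S.obj (S.obj X) ⟶ (Qf f).obj ((Qf f).obj X) :=
  (e₀ f).app (S.obj X) ≫ (Qf f).map ((e₀ f).app X)

/-- splitting of `E2` -/
noncomputable def sec2 (X : A) : SplitEpi (E2 f hsplit X) where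
  section_ := (Qf f).map ((sec f hsplit X).section_) ≫ (sec f hsplit (S.obj X)).section_
  id := by
    rw [E2]
    rw [Category.assoc, ← Category.assoc ((sec f hsplit (S.obj X)).section_),
      (sec f hsplit (S.obj X)).id, Category.id_comp, ← (Qf f).map_comp,
      (sec f hsplit X).id, (Qf f).map_id]

theorem E2_nat (X : A) :
    E2 f hsplit X = S.map ((e₀ f).app X) ≫ (e₀ f).app ((Qf f).obj X) := by
  rw [E2, (e₀ f).naturality ((e₀ f).app X)]

/-- `S.μ ≫ e₀` kills whatever `E2` kills -/
theorem cancel_E2 {X : A} {W : A} {a b : W ⟶ S.obj (S.obj X)}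
    (h : a ≫ E2 f hsplit X = b ≫ E2 f hsplit X) :
    a ≫ S.μ.app X ≫ (e₀ f).app X = b ≫ S.μ.app X ≫ (e₀ f).app X := by
  -- first: composing with the pointwise-mono `m`-parts turns `E2` into `f ◫ f`
  have key : ∀ c : W ⟶ S.obj (S.obj X),
      c ≫ E2 f hsplit X ≫ (m₀ f).app ((Qf f).obj X) ≫ T.map ((m₀ f).app X) =
        c ≫ f.app (S.obj X) ≫ T.map (f.app X) := by
    intro c
    rw [E2]
    simp only [Category.assoc]
    rw [(m₀ f).naturality_assoc ((e₀ f).app X)]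
    rw [reassoc_of% (em_app f (S.obj X))]
    rw [← Functor.map_comp, em_app f X]
  have hF : a ≫ f.app (S.obj X) ≫ T.map (f.app X) =
      b ≫ f.app (S.obj X) ≫ T.map (f.app X) := by
    rw [← key a, ← key b]
    simp only [← Category.assoc]
    rw [show a ≫ E2 f hsplit X = b ≫ E2 f hsplit X from h]
  -- monad morphism law for `f`
  have law : ∀ Y, S.μ.app Y ≫ f.app Y =
      f.app (S.obj Y) ≫ T.map (f.app Y) ≫ T.μ.app Y := by
    intro Y
    rw [f.app_μ Y]
    rw [← Category.assoc (f.app (S.obj Y)), ← f.toNatTrans.naturality (f.app Y)]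
  have hF' : (a ≫ f.app (S.obj X)) ≫ T.map (f.app X) =
      (b ≫ f.app (S.obj X)) ≫ T.map (f.app X) := by
    simpa only [Category.assoc] using hF
  have hμ : a ≫ S.μ.app X ≫ f.app X = b ≫ S.μ.app X ≫ f.app X := by
    rw [law X]
    simp only [← Category.assoc]
    rw [hF']
  have := cancel_e f (a := a ≫ S.μ.app X) (b := b ≫ S.μ.app X)
    (by simpa only [Category.assoc] using hμ)
  simpa only [Category.assoc] using this

/-- the multiplication of the image monad -/
noncomputable def μQ (X : A) : (Qf f).obj ((Qf f).obj X) ⟶ (Qf f).obj X :=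
  (sec2 f hsplit X).section_ ≫ S.μ.app X ≫ (e₀ f).app X

theorem E2_μQ (X : A) :
    E2 f hsplit X ≫ μQ f hsplit X = S.μ.app X ≫ (e₀ f).app X := by
  have h : (E2 f hsplit X ≫ (sec2 f hsplit X).section_) ≫ E2 f hsplit X =
      𝟙 _ ≫ E2 f hsplit X := by
    rw [Category.assoc, (sec2 f hsplit X).id, Category.comp_id, Category.id_comp]
  have := cancel_E2 f hsplit h
  simpa only [μQ, Category.assoc, Category.id_comp] using this

theorem μQ_nat {X Y : A} (h : X ⟶ Y) :
    (Qf f).map ((Qf f).map h) ≫ μQ f hsplit Y = μQ f hsplit X ≫ (Qf f).map h := by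
  have e2 : E2 f hsplit X ≫ (Qf f).map ((Qf f).map h) = S.map (S.map h) ≫ E2 f hsplit Y := by
    rw [E2, E2]
    simp only [Category.assoc]
    rw [← Functor.map_comp, ← (e₀ f).naturality h, Functor.map_comp,
      (e₀ f).naturality_assoc (S.map h)]
  have natμ := S.μ.naturality h
  simp only [Functor.comp_map] at natμ
  apply splitEpi_cancel (sec2 f hsplit X)
  calc E2 f hsplit X ≫ (Qf f).map ((Qf f).map h) ≫ μQ f hsplit Y
      = (E2 f hsplit X ≫ (Qf f).map ((Qf f).map h)) ≫ μQ f hsplit Y := by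
        rw [Category.assoc]
    _ = S.map (S.map h) ≫ E2 f hsplit Y ≫ μQ f hsplit Y := by
        rw [e2, Category.assoc]
    _ = S.map (S.map h) ≫ S.μ.app Y ≫ (e₀ f).app Y := by rw [E2_μQ]
    _ = (S.μ.app X ≫ S.map h) ≫ (e₀ f).app Y := by
        rw [← Category.assoc, natμ]
    _ = S.μ.app X ≫ (e₀ f).app X ≫ (Qf f).map h := by
        rw [Category.assoc, (e₀ f).naturality h]
    _ = E2 f hsplit X ≫ μQ f hsplit X ≫ (Qf f).map h := by
        rw [← Category.assoc, ← E2_μQ f hsplit X, Category.assoc]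

/-- the triple horizontal composite pointwise -/
noncomputable def E3 (hsplit : ∀ ⦃X Y : A⦄ (g : X ⟶ Y), StrongEpi g → IsSplitEpi g)
    (X : A) :
    S.obj (S.obj (S.obj X)) ⟶ (Qf f).obj ((Qf f).obj ((Qf f).obj X)) :=
  (e₀ f).app (S.obj (S.obj X)) ≫ (Qf f).map (E2 f hsplit X)

/-- splitting of `E3` -/
noncomputable def sec3 (X : A) : SplitEpi (E3 f hsplit X) where
  section_ := (Qf f).map ((sec2 f hsplit X).section_) ≫
    (sec f hsplit (S.obj (S.obj X))).section_
  id := by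
    rw [E3]
    rw [Category.assoc, ← Category.assoc ((sec f hsplit (S.obj (S.obj X))).section_),
      (sec f hsplit (S.obj (S.obj X))).id, Category.id_comp, ← (Qf f).map_comp,
      (sec2 f hsplit X).id, (Qf f).map_id]

theorem E3_eq (X : A) :
    E3 f hsplit X = E2 f hsplit (S.obj X) ≫ (Qf f).map ((Qf f).map ((e₀ f).app X)) := by
  rw [E3, E2, E2, (Qf f).map_comp, Category.assoc]

/-- the image monad -/
noncomputable def Rmonad : Monad A where
  toFunctor := Qf f
  η := S.η ≫ e₀ f
  μ :=
    { app := fun X => μQ f hsplit X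
      naturality := fun X Y h => μQ_nat f hsplit h }
  assoc X := by
    show (Qf f).map (μQ f hsplit X) ≫ μQ f hsplit X =
      μQ f hsplit ((Qf f).obj X) ≫ μQ f hsplit X
    apply splitEpi_cancel (sec3 f hsplit X)
    have nat := (e₀ f).naturality (S.μ.app X)
    simp only [Functor.comp_obj] at nat
    have hE : (e₀ f).app (S.obj X) ≫ (Qf f).map ((e₀ f).app X) ≫ μQ f hsplit X =
        S.μ.app X ≫ (e₀ f).app X := by
      have h2 := E2_μQ f hsplit X
      rw [E2] at h2
      simpa only [Category.assoc] using h2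
    have lhs : E3 f hsplit X ≫ (Qf f).map (μQ f hsplit X) ≫ μQ f hsplit X =
        S.map (S.μ.app X) ≫ S.μ.app X ≫ (e₀ f).app X := by
      rw [E3]
      simp only [Category.assoc]
      rw [← Functor.map_comp_assoc, E2_μQ, Functor.map_comp]
      simp only [Category.assoc]
      rw [← reassoc_of% nat, hE]
    have rhs : E3 f hsplit X ≫ μQ f hsplit ((Qf f).obj X) ≫ μQ f hsplit X =
        S.μ.app (S.obj X) ≫ S.μ.app X ≫ (e₀ f).app X := by
      rw [E3_eq]
      simp only [Category.assoc]
      rw [reassoc_of% (μQ_nat f hsplit ((e₀ f).app X))]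
      rw [reassoc_of% (E2_μQ f hsplit (S.obj X))]
      rw [hE]
    rw [lhs, rhs]
    rw [← Category.assoc, S.assoc X, Category.assoc]
  left_unit X := by
    show (S.η ≫ e₀ f).app ((Qf f).obj X) ≫ μQ f hsplit X = 𝟙 ((Qf f).obj X)
    apply splitEpi_cancel (sec f hsplit X)
    have h1 := S.η.naturality ((e₀ f).app X)
    simp only [Functor.id_map] at h1
    simp only [NatTrans.comp_app, Category.comp_id, Category.assoc]
    rw [reassoc_of% h1, ← reassoc_of% (E2_nat f hsplit X), E2_μQ,
      reassoc_of% (S.left_unit X)]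
  right_unit X := by
    show (Qf f).map ((S.η ≫ e₀ f).app X) ≫ μQ f hsplit X = 𝟙 ((Qf f).obj X)
    apply splitEpi_cancel (sec f hsplit X)
    have h1 := (e₀ f).naturality (S.η.app X ≫ (e₀ f).app X)
    simp only [NatTrans.comp_app, Category.comp_id, Category.assoc]
    rw [← reassoc_of% h1]
    simp only [Functor.map_comp, Category.assoc]
    rw [← reassoc_of% (E2_nat f hsplit X), E2_μQ, reassoc_of% (S.right_unit X)]

/-- the projection as a monad morphism -/
noncomputable def eM : S ⟶ Rmonad f hsplit where
  toNatTrans := e₀ f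
  app_η X := rfl
  app_μ X := by
    have : (S.map ((e₀ f).app X) ≫ (e₀ f).app ((Qf f).obj X)) = E2 f hsplit X :=
      (E2_nat f hsplit X).symm
    show S.μ.app X ≫ (e₀ f).app X =
      (S.map ((e₀ f).app X) ≫ (e₀ f).app ((Qf f).obj X)) ≫ μQ f hsplit X
    rw [this, E2_μQ]

/-- the inclusion as a monad morphism -/
noncomputable def mM : Rmonad f hsplit ⟶ T where
  toNatTrans := m₀ f
  app_η X := by
    show (S.η.app X ≫ (e₀ f).app X) ≫ (m₀ f).app X = T.η.app X
    rw [Category.assoc, em_app f X, f.app_η X]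
  app_μ X := by
    show μQ f hsplit X ≫ (m₀ f).app X =
      ((Qf f).map ((m₀ f).app X) ≫ (m₀ f).app (T.obj X)) ≫ T.μ.app X
    apply splitEpi_cancel (sec2 f hsplit X)
    have law : S.μ.app X ≫ f.app X =
        f.app (S.obj X) ≫ T.map (f.app X) ≫ T.μ.app X := by
      rw [f.app_μ X, ← Category.assoc (f.app (S.obj X)),
        ← f.toNatTrans.naturality (f.app X)]
    rw [reassoc_of% (E2_μQ f hsplit X), em_app f X, law]
    rw [E2]
    simp only [Category.assoc]
    rw [← Functor.map_comp_assoc, em_app f X]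
    rw [(m₀ f).naturality_assoc (f.app X)]
    rw [reassoc_of% (em_app f (S.obj X))]

theorem eM_mM : eM f hsplit ≫ mM f hsplit = f := by
  apply MonadHom.ext'
  funext X
  exact em_app f X

theorem epi_eM : Epi (eM f hsplit) := by
  constructor
  intro Z g h w
  apply MonadHom.ext'
  funext X
  apply splitEpi_cancel (sec f hsplit X)
  have := NatTrans.congr_app (congrArg MonadHom.toNatTrans w) X
  simp at this
  exact this

theorem mono_mM : Mono (mM f hsplit) := by
  constructor
  intro Z g h w
  apply MonadHom.ext'
  funext X
  have := mono_m₀ f hsplit X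
  have happ := NatTrans.congr_app (congrArg MonadHom.toNatTrans w) X
  exact (cancel_mono ((m₀ f).app X)).mp happ

theorem strongEpi_eM : StrongEpi (eM f hsplit) := by
  refine ⟨epi_eM f hsplit, ?_⟩
  intro Z₁ Z₂ n hn
  constructor
  intro u v sq
  -- monos in `Monad A` are pointwise monos
  have napp : ∀ X : A, Mono (n.app X) := mono_app_of_mono n hn
  -- the square commutes pointwise
  have sqw : ∀ X : A, u.app X ≫ n.app X = (e₀ f).app X ≫ v.app X := by
    intro X
    have := NatTrans.congr_app (congrArg MonadHom.toNatTrans sq.w) X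
    simp at this
    exact this
  -- the candidate lift, pointwise
  let l : ∀ X : A, (Qf f).obj X ⟶ Z₁.obj X :=
    fun X => (sec f hsplit X).section_ ≫ u.app X
  have ln : ∀ X : A, l X ≫ n.app X = v.app X := by
    intro X
    show ((sec f hsplit X).section_ ≫ u.app X) ≫ n.app X = v.app X
    erw [Category.assoc, sqw X, ← Category.assoc, (sec f hsplit X).id, Category.id_comp]
  have el : ∀ X : A, (e₀ f).app X ≫ l X = u.app X := by
    intro X
    have := napp X
    apply (cancel_mono (n.app X)).mp
    rw [Category.assoc, ln X, ← sqw X]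
  have lnat : ∀ {X Y : A} (h : X ⟶ Y), (Qf f).map h ≫ l Y = l X ≫ Z₁.map h := by
    intro X Y h
    have := napp Y
    apply (cancel_mono (n.app Y)).mp
    rw [Category.assoc, ln Y, Category.assoc, n.toNatTrans.naturality h,
      ← Category.assoc, ln X]
    exact v.toNatTrans.naturality h
  refine CommSq.HasLift.mk' ⟨⟨⟨l, fun _ _ h => lnat h⟩, ?_, ?_⟩, ?_, ?_⟩
  · -- app_η
    intro X
    have := napp X
    apply (cancel_mono (n.app X)).mp
    show ((Rmonad f hsplit).η.app X ≫ l X) ≫ n.app X = Z₁.η.app X ≫ n.app X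
    erw [Category.assoc, ln X, n.app_η X]
    exact v.app_η X
  · -- app_μ
    intro X
    have := napp X
    apply (cancel_mono (n.app X)).mp
    show (μQ f hsplit X ≫ l X) ≫ n.app X =
      (((Qf f).map (l X) ≫ l (Z₁.obj X)) ≫ Z₁.μ.app X) ≫ n.app X
    rw [Category.assoc, ln X]
    have hv : μQ f hsplit X ≫ v.app X =
        ((Qf f).map (v.app X) ≫ v.app (Z₂.obj X)) ≫ Z₂.μ.app X := v.app_μ X
    calc μQ f hsplit X ≫ v.app X
        = (((Qf f).map (v.app X) ≫ v.app (Z₂.obj X)) ≫ Z₂.μ.app X :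
            (Qf f).obj ((Qf f).obj X) ⟶ Z₂.obj X) := hv
      _ = ((Qf f).map (l X ≫ n.app X) ≫ v.app (Z₂.obj X)) ≫ Z₂.μ.app X := by rw [ln X]
      _ = (Qf f).map (l X) ≫ ((Qf f).map (n.app X) ≫ l (Z₂.obj X) ≫ n.app (Z₂.obj X)) ≫
            Z₂.μ.app X := by
          rw [(Qf f).map_comp, ln (Z₂.obj X)]
          exact (Category.assoc _ _ _).trans ((Category.assoc _ _ _).trans
            (congrArg (fun t => (Qf f).map (l X) ≫ t) (Category.assoc _ _ _).symm))
      _ = (Qf f).map (l X) ≫ ((l (Z₁.obj X) ≫ Z₁.map (n.app X)) ≫ n.app (Z₂.obj X)) ≫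
            Z₂.μ.app X := by
          rw [← lnat (n.app X)]; simp only [Category.assoc]
      _ = (Qf f).map (l X) ≫ l (Z₁.obj X) ≫ Z₁.μ.app X ≫ n.app X := by
          rw [n.app_μ X]; simp only [Category.assoc]
      _ = (((Qf f).map (l X) ≫ l (Z₁.obj X)) ≫ Z₁.μ.app X) ≫ n.app X := by
          simp only [Category.assoc]
  · -- fac_left : eM ≫ l = u
    apply MonadHom.ext'
    funext X
    exact el X
  · -- fac_right : l ≫ n = v
    apply MonadHom.ext'
    funext X
    exact ln X

end Factorization

end Stmt8Aux

theorem stmt8 (A : Type u) [Category.{v} A] [HasLimits A] [HasColimits A]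
    (hst : StableMonos A)
    (hsplit : ∀ {X Y : A} (f : X ⟶ Y), StrongEpi f → IsSplitEpi f) :
    ∀ {S T : Monad A} (f : S ⟶ T),
      ∃ (R : Monad A) (e : S ⟶ R) (m : R ⟶ T),
        e ≫ m = f ∧
        (∀ X : A, IsSplitEpi (e.toNatTrans.app X)) ∧
        (∀ X : A, Mono (m.toNatTrans.app X)) ∧
        StrongEpi e ∧ Mono m := by
  intro S T f
  have hs : ∀ ⦃X Y : A⦄ (g : X ⟶ Y), StrongEpi g → IsSplitEpi g := fun _ _ g hg => hsplit g hg
  refine ⟨Stmt8Aux.Rmonad f hs, Stmt8Aux.eM f hs, Stmt8Aux.mM f hs,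
    Stmt8Aux.eM_mM f hs, ?_, ?_, Stmt8Aux.strongEpi_eM f hs,
    Stmt8Aux.mono_mM f hs⟩
  · intro X
    exact ⟨⟨Stmt8Aux.sec f hs X⟩⟩
  · intro X
    exact Stmt8Aux.mono_m₀ f hs X
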